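/- Fix m ≥ 2 and n ≥ 0. For every σ in the simple m-nary butterfly group B_{s,n}^{(m)}, D(σ) is a power of 2, and for each 0 ≤ k ≤ n the number of σ ∈ B_{s,n}^{(m)} with D(σ) = 2^k equals C(n,k)·(m−1)^k. Equivalently, for σ uniform on B_{s,n}^{(m)}, log₂ D(σ) has the Binomial(n, (m−1)/m) distribution (D doubles at a recursion level exactly when the corresponding Kronecker factor is not the identity, which happens with probability (m−1)/m). -/

import Mathlib

/-- Kronecker product of permutations: `(i, r) ↦ (σ i, π r)` under the
row-major identification `Fin (a * b) ≃ Fin a × Fin b`. -/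
def permKron {a b : ℕ} (σ : Equiv.Perm (Fin a)) (π : Equiv.Perm (Fin b)) :
    Equiv.Perm (Fin (a * b)) :=
  finProdFinEquiv.symm.trans ((Equiv.prodCongr σ π).trans finProdFinEquiv)

/-- Direct (block) sum of permutations: `(i, r) ↦ (i, π i r)`. -/
def permBlockSum {a b : ℕ} (π : Fin a → Equiv.Perm (Fin b)) :
    Equiv.Perm (Fin (a * b)) :=
  finProdFinEquiv.symm.trans ((Equiv.prodCongrRight π).trans finProdFinEquiv)

/-- The simple `m`-nary butterfly permutations of `Fin (m ^ n)`:
Kronecker products `τ^{a₁} ⊗ ⋯ ⊗ τ^{aₙ}` of powers of the standard `m`-cycle `τ = finRotate m`. -/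
def simpleButterfly (m : ℕ) : (n : ℕ) → Set (Equiv.Perm (Fin (m ^ n)))
  | 0 => {1}
  | n + 1 =>
    {σ | ∃ (a : ℤ) (π : Equiv.Perm (Fin (m ^ n))), π ∈ simpleButterfly m n ∧
      σ = (finCongr (pow_succ' m n).symm).permCongr (permKron (finRotate m ^ a) π)}

/-- The nonsimple `m`-nary butterfly permutations of `Fin (m ^ n)`:
`B₀ = {1}`, `B_{n+1} = {(τ^a ⊗ id) ∘ (σ₁ ⊕ ⋯ ⊕ σ_m) : σᵢ ∈ B_n}`. -/
def nonsimpleButterfly (m : ℕ) : (n : ℕ) → Set (Equiv.Perm (Fin (m ^ n)))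
  | 0 => {1}
  | n + 1 =>
    {σ | ∃ (a : ℤ) (π : Fin m → Equiv.Perm (Fin (m ^ n))),
      (∀ i, π i ∈ nonsimpleButterfly m n) ∧
      σ = (finCongr (pow_succ' m n).symm).permCongr
        (permKron (finRotate m ^ a) 1 * permBlockSum π)}

/-- The length of the longest increasing subsequence of a permutation. -/
noncomputable def LIS {M : ℕ} (σ : Equiv.Perm (Fin M)) : ℕ :=
  sSup {k | ∃ t : Finset (Fin M), t.card = k ∧ StrictMonoOn (⇑σ) ↑t}

/-- The length of the longest decreasing subsequence of a permutation. -/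
noncomputable def LDS {M : ℕ} (σ : Equiv.Perm (Fin M)) : ℕ :=
  sSup {k | ∃ t : Finset (Fin M), t.card = k ∧ StrictAntiOn (⇑σ) ↑t}

/-- The number of cycles in the disjoint cycle decomposition of `σ`,
counting fixed points as cycles of length 1. -/
def numCycles {M : ℕ} (σ : Equiv.Perm (Fin M)) : ℕ :=
  Multiset.card σ.cycleType + (Finset.univ.filter fun x => σ x = x).card

/-- The number of fixed points of `σ`. -/
def numFixed {M : ℕ} (σ : Equiv.Perm (Fin M)) : ℕ :=
  (Finset.univ.filter fun x => σ x = x).card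

/-- For the simple `m`-nary butterfly group: every element has LDS a power of 2, and
the number of elements with `D(σ) = 2^k` is `C(n,k)·(m−1)^k`; i.e. `log₂ D(σ)` is
`Binom(n, (m−1)/m)` for `σ` uniform on `B_{s,n}^{(m)}`. -/
-- auxiliary lemmas
lemma nat_block_lt {b : ℕ} (i i' r r' : ℕ) (hr : r < b) (hr' : r' < b) :
    r + b * i < r' + b * i' ↔ i < i' ∨ (i = i' ∧ r < r') := by
  constructor
  · intro h
    rcases lt_trichotomy i i' with hi | hi | hi
    · exact Or.inl hi
    · subst hi; exact Or.inr ⟨rfl, by omega⟩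
    · exfalso
      have h3 : b * (i' + 1) ≤ b * i := Nat.mul_le_mul_left b hi
      rw [Nat.mul_add, Nat.mul_one] at h3
      omega
  · rintro (hi | ⟨rfl, h2⟩)
    · have h3 : b * (i + 1) ≤ b * i' := Nat.mul_le_mul_left b hi
      rw [Nat.mul_add, Nat.mul_one] at h3
      omega
    · omega

lemma LDS_def {M : ℕ} (σ : Equiv.Perm (Fin M)) :
    LDS σ = sSup {k | ∃ t : Finset (Fin M), t.card = k ∧ StrictAntiOn (⇑σ) ↑t} := rfl

lemma lds_le_of_forall {M : ℕ} {σ : Equiv.Perm (Fin M)} {c : ℕ}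
    (h : ∀ t : Finset (Fin M), StrictAntiOn (⇑σ) ↑t → t.card ≤ c) : LDS σ ≤ c := by
  rw [LDS_def]
  apply csSup_le
  · exact ⟨0, ∅, by simp, by intro x hx; simp at hx⟩
  · rintro k ⟨t, rfl, ht⟩
    exact h t ht

lemma lds_bddAbove {M : ℕ} (σ : Equiv.Perm (Fin M)) :
    BddAbove {k | ∃ t : Finset (Fin M), t.card = k ∧ StrictAntiOn (⇑σ) ↑t} := by
  refine ⟨M, ?_⟩
  rintro k ⟨t, rfl, -⟩
  exact (Finset.card_le_univ t).trans (by simp)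

lemma card_le_lds {M : ℕ} {σ : Equiv.Perm (Fin M)} {t : Finset (Fin M)}
    (ht : StrictAntiOn (⇑σ) ↑t) : t.card ≤ LDS σ :=
  le_csSup (lds_bddAbove σ) ⟨t, rfl, ht⟩

lemma lds_exists {M : ℕ} (σ : Equiv.Perm (Fin M)) :
    ∃ t : Finset (Fin M), t.card = LDS σ ∧ StrictAntiOn (⇑σ) ↑t := by
  have hne : (0:ℕ) ∈ {k | ∃ t : Finset (Fin M), t.card = k ∧ StrictAntiOn (⇑σ) ↑t} :=
    ⟨∅, by simp, by intro x hx; simp at hx⟩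
  have := Nat.sSup_mem ⟨0, hne⟩ (lds_bddAbove σ)
  rw [← LDS_def] at this
  exact this

lemma fin_kron_lt_iff {a b : ℕ} (i i' : Fin a) (r r' : Fin b) :
    finProdFinEquiv (i, r) < finProdFinEquiv (i', r') ↔ i < i' ∨ (i = i' ∧ r < r') := by
  have := nat_block_lt (b := b) i.val i'.val r.val r'.val r.isLt r'.isLt
  simp only [Fin.lt_def, finProdFinEquiv_apply_val] at *
  rw [this]
  simp [Fin.ext_iff]

lemma permKron_apply {a b : ℕ} (σ : Equiv.Perm (Fin a)) (π : Equiv.Perm (Fin b))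
    (i : Fin a) (r : Fin b) :
    permKron σ π (finProdFinEquiv (i, r)) = finProdFinEquiv (σ i, π r) := by
  simp [permKron]

lemma fin_rep (a b : ℕ) (x : Fin (a * b)) :
    x = finProdFinEquiv ((finProdFinEquiv.symm x).1, (finProdFinEquiv.symm x).2) :=
  (finProdFinEquiv.apply_symm_apply x).symm

lemma lds_permKron {a b : ℕ} (σ : Equiv.Perm (Fin a)) (π : Equiv.Perm (Fin b)) :
    LDS (permKron σ π) = LDS σ * LDS π := by
  classical
  set f : Fin (a * b) → Fin a := fun x => (finProdFinEquiv.symm x).1 with hf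
  set g : Fin (a * b) → Fin b := fun x => (finProdFinEquiv.symm x).2 with hg
  have hrep : ∀ x : Fin (a * b), x = finProdFinEquiv (f x, g x) := fun x =>
    (finProdFinEquiv.apply_symm_apply x).symm
  apply le_antisymm
  · apply lds_le_of_forall
    intro u hu
    rw [Finset.card_eq_sum_card_fiberwise (f := f) (t := u.image f)
      (fun x hx => Finset.mem_image_of_mem f hx)]
    have hfiber : ∀ i ∈ u.image f, (u.filter fun x => f x = i).card ≤ LDS π := by
      intro i _
      have hinj : Set.InjOn g ↑(u.filter fun x => f x = i) := by
        intro x hx y hy hxy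
        simp only [Finset.coe_filter, Set.mem_setOf_eq] at hx hy
        have h1 : finProdFinEquiv.symm x = finProdFinEquiv.symm y :=
          Prod.ext (hx.2.trans hy.2.symm) hxy
        exact finProdFinEquiv.symm.injective h1
      rw [← Finset.card_image_of_injOn hinj]
      apply card_le_lds
      intro r hr r' hr' hlt
      simp only [Finset.coe_image, Set.mem_image, Finset.mem_coe, Finset.mem_filter] at hr hr'
      obtain ⟨x, ⟨hxu, hxi⟩, rfl⟩ := hr
      obtain ⟨y, ⟨hyu, hyi⟩, rfl⟩ := hr'
      have hxy : x < y := by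
        rw [hrep x, hrep y, fin_kron_lt_iff]
        exact Or.inr ⟨hxi.trans hyi.symm, hlt⟩
      have := hu (Finset.mem_coe.mpr hxu) (Finset.mem_coe.mpr hyu) hxy
      rw [hrep y, permKron_apply, hrep x, permKron_apply, fin_kron_lt_iff] at this
      rcases this with h | ⟨-, h⟩
      · rw [hxi, hyi] at h; exact absurd h (lt_irrefl _)
      · exact h
    have himg : StrictAntiOn (⇑σ) ↑(u.image f) := by
      intro i hi i' hi' hlt
      simp only [Finset.coe_image, Set.mem_image, Finset.mem_coe] at hi hi'
      obtain ⟨x, hxu, rfl⟩ := hi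
      obtain ⟨y, hyu, rfl⟩ := hi'
      have hxy : x < y := by
        rw [hrep x, hrep y, fin_kron_lt_iff]
        exact Or.inl hlt
      have := hu (Finset.mem_coe.mpr hxu) (Finset.mem_coe.mpr hyu) hxy
      rw [hrep y, permKron_apply, hrep x, permKron_apply, fin_kron_lt_iff] at this
      rcases this with h | ⟨heq, -⟩
      · exact h
      · exact absurd (σ.injective heq) (ne_of_gt hlt)
    calc ∑ i ∈ u.image f, (u.filter fun x => f x = i).card
        ≤ ∑ _i ∈ u.image f, LDS π := Finset.sum_le_sum hfiber
      _ = (u.image f).card * LDS π := by rw [Finset.sum_const, smul_eq_mul]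
      _ ≤ LDS σ * LDS π := Nat.mul_le_mul_right _ (card_le_lds himg)
  · obtain ⟨t, ht, hta⟩ := lds_exists σ
    obtain ⟨s, hs, hsa⟩ := lds_exists π
    have hcard : ((t ×ˢ s).image finProdFinEquiv).card = LDS σ * LDS π := by
      rw [Finset.card_image_of_injective _ finProdFinEquiv.injective,
        Finset.card_product, ht, hs]
    rw [← hcard]
    apply card_le_lds
    intro x hx y hy hxy
    simp only [Finset.coe_image, Set.mem_image, Finset.mem_coe, Finset.mem_product] at hx hy
    obtain ⟨⟨i, r⟩, ⟨hit, hrs⟩, rfl⟩ := hx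
    obtain ⟨⟨i', r'⟩, ⟨hit', hrs'⟩, rfl⟩ := hy
    rw [fin_kron_lt_iff] at hxy
    rw [permKron_apply, permKron_apply, fin_kron_lt_iff]
    rcases hxy with h | ⟨rfl, h⟩
    · exact Or.inl (hta (Finset.mem_coe.mpr hit) (Finset.mem_coe.mpr hit') h)
    · exact Or.inr ⟨rfl, hsa (Finset.mem_coe.mpr hrs) (Finset.mem_coe.mpr hrs') h⟩

open Fin.CommRing in
lemma addRight_mul_fin {m : ℕ} (x y : Fin (m+1)) :
    Equiv.addRight (x + y) = Equiv.addRight x * Equiv.addRight y := by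
  ext z
  simp [Equiv.Perm.mul_apply]
  ring_nf

lemma finRotate_eq_addRight (m : ℕ) :
    finRotate (m+1) = Equiv.addRight (1 : Fin (m+1)) := by
  ext x
  simp [finRotate_succ_apply]

open Fin.CommRing in
lemma finRotate_zpow (m : ℕ) (a : ℤ) :
    finRotate (m+1) ^ a = Equiv.addRight ((a : Fin (m+1))) := by
  induction a using Int.induction_on with
  | zero => ext x; simp
  | succ a ih =>
      rw [zpow_add_one, ih, finRotate_eq_addRight, ← addRight_mul_fin]
      push_cast
      ring_nf
  | pred a ih =>
      rw [zpow_sub_one, ih, finRotate_eq_addRight]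
      have h1 : (Equiv.addRight (1 : Fin (m+1)))⁻¹ = Equiv.addRight (-1 : Fin (m+1)) := by
        rw [eq_comm, eq_inv_iff_mul_eq_one, ← addRight_mul_fin]
        ext z; simp
      rw [h1, ← addRight_mul_fin]
      push_cast
      ring_nf

lemma lds_one (M : ℕ) (hM : 0 < M) : LDS (1 : Equiv.Perm (Fin M)) = 1 := by
  apply le_antisymm
  · apply lds_le_of_forall
    intro t ht
    by_contra h
    push_neg at h
    obtain ⟨x, hx, y, hy, hxy⟩ := Finset.one_lt_card.mp h
    rcases hxy.lt_or_gt with h1 | h1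
    · have := ht (Finset.mem_coe.mpr hx) (Finset.mem_coe.mpr hy) h1
      simp at this
      exact absurd this (lt_asymm h1)
    · have := ht (Finset.mem_coe.mpr hy) (Finset.mem_coe.mpr hx) h1
      simp at this
      exact absurd this (lt_asymm h1)
  · have : StrictAntiOn (⇑(1 : Equiv.Perm (Fin M))) ↑({⟨0, hM⟩} : Finset (Fin M)) := by
      intro p hp q hq hpq
      simp at hp hq
      rw [hp, hq] at hpq
      exact absurd hpq (lt_irrefl _)
    simpa using card_le_lds this

lemma lds_addRight_zero (m : ℕ) : LDS (Equiv.addRight (0 : Fin (m+1))) = 1 := by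
  have : Equiv.addRight (0 : Fin (m+1)) = 1 := by ext z; simp
  rw [this, lds_one _ (Nat.succ_pos m)]

lemma fin_mod_cases {m : ℕ} (s : ℕ) (hs : s < 2 * (m+1)) :
    s % (m+1) = if s < m+1 then s else s - (m+1) := by
  split_ifs with h
  · exact Nat.mod_eq_of_lt h
  · rw [Nat.mod_eq_sub_mod (by omega)]
    exact Nat.mod_eq_of_lt (by omega)

lemma lds_addRight_ne {m : ℕ} (r : Fin (m+1)) (hr : r ≠ 0) :
    LDS (Equiv.addRight r) = 2 := by
  classical
  have hval : ∀ x : Fin (m+1), (Equiv.addRight r x).val = (x.val + r.val) % (m+1) := by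
    intro x
    simp [Fin.add_def]
  have hc1 : 1 ≤ r.val := Nat.one_le_iff_ne_zero.mpr (by
    intro h; exact hr (Fin.ext (by simp [h])))
  have hc2 : r.val ≤ m := Nat.lt_succ_iff.mp r.isLt
  apply le_antisymm
  · apply lds_le_of_forall
    intro t ht
    set f : Fin (m+1) → ℕ := fun x => if x.val + r.val < m+1 then 0 else 1 with hf
    have hmono : ∀ x ∈ (↑t : Set (Fin (m+1))), ∀ y ∈ (↑t : Set (Fin (m+1))),
        x < y → f x < f y := by
      intro x hx y hy hxy
      have hv := ht hx hy hxy
      rw [Fin.lt_def, hval, hval] at hv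
      rw [fin_mod_cases _ (by omega), fin_mod_cases _ (by omega)] at hv
      have hxy' : x.val < y.val := hxy
      simp only [hf]
      split_ifs at hv ⊢ <;> omega
    have hinj : Set.InjOn f ↑t := by
      intro x hx y hy hxy
      rcases lt_trichotomy x y with h | h | h
      · exact absurd hxy (ne_of_lt (hmono x hx y hy h))
      · exact h
      · exact absurd hxy.symm (ne_of_lt (hmono y hy x hx h))
    calc t.card = (t.image f).card := (Finset.card_image_of_injOn hinj).symm
      _ ≤ ({0, 1} : Finset ℕ).card := by
          apply Finset.card_le_card
          intro z hz
          simp only [Finset.mem_image] at hz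
          obtain ⟨x, -, rfl⟩ := hz
          simp only [hf]
          split_ifs <;> simp
      _ ≤ 2 := by simp
  · set x : Fin (m+1) := ⟨m - r.val, by omega⟩ with hx
    set y : Fin (m+1) := ⟨m + 1 - r.val, by omega⟩ with hy
    have hxyne : x ≠ y := by
      intro h
      rw [Fin.ext_iff] at h
      simp only [hx, hy] at h
      omega
    have hxlty : x < y := by
      rw [Fin.lt_def]
      simp only [hx, hy]
      omega
    have hvx : (Equiv.addRight r x).val = m := by
      rw [hval]
      simp only [hx]
      rw [Nat.sub_add_cancel hc2]
      exact Nat.mod_eq_of_lt (Nat.lt_succ_self m)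
    have hvy : (Equiv.addRight r y).val = 0 := by
      rw [hval]
      simp only [hy]
      rw [Nat.sub_add_cancel (by omega)]
      exact Nat.mod_self _
    have hanti : StrictAntiOn (⇑(Equiv.addRight r)) ↑({x, y} : Finset (Fin (m+1))) := by
      intro p hp q hq hpq
      simp only [Finset.coe_insert, Finset.coe_singleton, Set.mem_insert_iff,
        Set.mem_singleton_iff] at hp hq
      rcases hp with rfl | rfl <;> rcases hq with rfl | rfl
      · exact absurd hpq (lt_irrefl _)
      · rw [Fin.lt_def, hvx, hvy]; omega
      · exact absurd hpq (asymm hxlty)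
      · exact absurd hpq (lt_irrefl _)
    have := card_le_lds hanti
    rwa [Finset.card_insert_of_notMem (by simp [hxyne]), Finset.card_singleton] at this

lemma lds_permCongr {M N : ℕ} (h : M = N) (τ : Equiv.Perm (Fin M)) :
    LDS ((finCongr h).permCongr τ) = LDS τ := by
  subst h
  have : (finCongr rfl).permCongr τ = τ := by
    ext x
    simp [Equiv.permCongr_apply]
  rw [this]

def butterflyChain (m' : ℕ) : (n : ℕ) → (Fin n → Fin (m'+1)) → Equiv.Perm (Fin ((m'+1) ^ n))
  | 0, _ => 1
  | n + 1, v => (finCongr (pow_succ' (m'+1) n).symm).permCongr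
      (permKron (Equiv.addRight (v 0)) (butterflyChain m' n (Fin.tail v)))

open Fin.CommRing in
lemma simpleButterfly_eq_range (m' : ℕ) (n : ℕ) :
    simpleButterfly (m'+1) n = Set.range (butterflyChain m' n) := by
  induction n with
  | zero =>
      ext σ
      constructor
      · intro h
        rw [simpleButterfly] at h
        exact ⟨Fin.elim0, by rw [butterflyChain]; exact h.symm⟩
      · rintro ⟨v, rfl⟩
        rw [simpleButterfly, butterflyChain]
        rfl
  | succ n ih =>
      ext σ
      constructor
      · rintro ⟨a, π, hπ, rfl⟩
        rw [ih] at hπ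
        obtain ⟨w, rfl⟩ := hπ
        refine ⟨Fin.cons ((a : Fin (m'+1))) w, ?_⟩
        rw [butterflyChain, Fin.cons_zero, Fin.tail_cons, finRotate_zpow]
      · rintro ⟨v, rfl⟩
        refine ⟨((v 0).val : ℤ), butterflyChain m' n (Fin.tail v), ?_, ?_⟩
        · rw [ih]; exact ⟨Fin.tail v, rfl⟩
        · rw [butterflyChain, finRotate_zpow]
          norm_cast

lemma butterflyChain_injective (m' n : ℕ) :
    Function.Injective (butterflyChain m' n) := by
  induction n with
  | zero => exact fun v w _ => Subsingleton.elim v w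
  | succ n ih =>
      intro v w h
      rw [butterflyChain, butterflyChain] at h
      have h2 := (finCongr (pow_succ' (m'+1) n).symm).permCongr.injective h
      have hkey : ∀ (i : Fin (m'+1)) (x : Fin ((m'+1)^n)),
          (i + v 0, butterflyChain m' n (Fin.tail v) x) =
          (i + w 0, butterflyChain m' n (Fin.tail w) x) := by
        intro i x
        have := congrArg (fun e : Equiv.Perm (Fin ((m'+1) * (m'+1)^n)) =>
          e (finProdFinEquiv (i, x))) h2
        simp only [permKron_apply] at this
        have := finProdFinEquiv.injective this
        simpa [Equiv.coe_addRight] using this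
      have h0 : v 0 = w 0 := by
        have := (Prod.ext_iff.mp (hkey 0 ⟨0, Nat.pow_pos (Nat.succ_pos m')⟩)).1
        simpa using this
      have htail : Fin.tail v = Fin.tail w :=
        ih (Equiv.ext fun x => (Prod.ext_iff.mp (hkey 0 x)).2)
      rw [← Fin.cons_self_tail v, ← Fin.cons_self_tail w, h0, htail]

lemma butterflyChain_lds (m' n : ℕ) (v : Fin n → Fin (m'+1)) :
    LDS (butterflyChain m' n v) =
      2 ^ (Finset.univ.filter fun i => v i ≠ 0).card := by
  classical
  induction n with
  | zero =>
      rw [butterflyChain]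
      simp only [Finset.univ_eq_empty, Finset.filter_empty, Finset.card_empty, pow_zero]
      exact lds_one _ (Nat.pow_pos (Nat.succ_pos m'))
  | succ n ih =>
      rw [butterflyChain, lds_permCongr, lds_permKron, ih]
      have hcount : (Finset.univ.filter fun i => v i ≠ 0).card =
          (if v 0 ≠ 0 then 1 else 0) +
          (Finset.univ.filter fun i => Fin.tail v i ≠ 0).card := by
        rw [Finset.card_filter, Finset.card_filter, Fin.sum_univ_succ]
        rfl
      by_cases h0 : v 0 = 0
      · rw [h0, lds_addRight_zero, hcount]
        simp [h0]
      · rw [lds_addRight_ne _ h0, hcount]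
        simp only [h0, ne_eq, not_false_eq_true, if_true]
        rw [pow_add, pow_one]

def suppEquiv {n m' : ℕ} (s : Finset (Fin n)) :
    {v : Fin n → Fin (m'+1) // Finset.univ.filter (fun i => v i ≠ 0) = s} ≃
      (↥s → {x : Fin (m'+1) // x ≠ 0}) where
  toFun v i := ⟨v.1 i, by
    have hi : (i : Fin n) ∈ Finset.univ.filter (fun i => v.1 i ≠ 0) := by
      rw [v.2]; exact i.2
    exact (Finset.mem_filter.mp hi).2⟩
  invFun f := ⟨fun i => if h : i ∈ s then (f ⟨i, h⟩).1 else 0, by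
    ext i
    simp only [Finset.mem_filter, Finset.mem_univ, true_and]
    by_cases h : i ∈ s
    · simp [h, (f ⟨i, h⟩).2]
    · simp [h]⟩
  left_inv v := by
    apply Subtype.ext
    funext i
    by_cases h : i ∈ s
    · simp [h]
    · simp only [h, dif_neg, not_false_eq_true]
      have : i ∉ Finset.univ.filter (fun i => v.1 i ≠ 0) := by rw [v.2]; exact h
      simp only [Finset.mem_filter, Finset.mem_univ, true_and, not_not] at this
      exact this.symm
  right_inv f := by
    funext i
    apply Subtype.ext
    simp [i.2]

lemma card_support_eq (m' n k : ℕ) :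
    (Finset.univ.filter fun v : Fin n → Fin (m'+1) =>
      (Finset.univ.filter fun i => v i ≠ 0).card = k).card = n.choose k * m' ^ k := by
  classical
  rw [Finset.card_eq_sum_card_fiberwise
    (f := fun v : Fin n → Fin (m'+1) => Finset.univ.filter fun i => v i ≠ 0)
    (t := Finset.univ.filter fun s : Finset (Fin n) => s.card = k)
    (by intro v hv; simp only [Finset.mem_coe, Finset.mem_filter, Finset.mem_univ, true_and] at hv ⊢; exact hv)]
  have hfib : ∀ s ∈ Finset.univ.filter fun s : Finset (Fin n) => s.card = k,
      ((Finset.univ.filter fun v : Fin n → Fin (m'+1) =>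
        (Finset.univ.filter fun i => v i ≠ 0).card = k).filter
        (fun v => Finset.univ.filter (fun i => v i ≠ 0) = s)).card = m' ^ k := by
    intro s hs
    simp only [Finset.mem_filter, Finset.mem_univ, true_and] at hs
    have heq : ((Finset.univ.filter fun v : Fin n → Fin (m'+1) =>
        (Finset.univ.filter fun i => v i ≠ 0).card = k).filter
        (fun v => Finset.univ.filter (fun i => v i ≠ 0) = s)) =
        Finset.univ.filter (fun v : Fin n → Fin (m'+1) =>
          Finset.univ.filter (fun i => v i ≠ 0) = s) := by
      rw [Finset.filter_filter]
      apply Finset.filter_congr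
      intro v _
      constructor
      · rintro ⟨-, h⟩; exact h
      · intro h; exact ⟨by rw [h, hs], h⟩
    rw [heq, ← Fintype.card_subtype, Fintype.card_congr (suppEquiv s),
      Fintype.card_fun, Fintype.card_coe, hs]
    congr 1
    rw [Fintype.card_subtype]
    rw [show (Finset.univ.filter fun x : Fin (m'+1) => x ≠ 0) = Finset.univ.erase 0 from
      Finset.filter_ne' _ _]
    rw [Finset.card_erase_of_mem (Finset.mem_univ _)]
    simp
  rw [Finset.sum_congr rfl hfib, Finset.sum_const, smul_eq_mul]
  congr 1
  rw [← Fintype.card_subtype, Fintype.card_finset_len]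
  simp


theorem simpleButterfly_LDS_binomial (m n : ℕ) (hm : 2 ≤ m) :
    (∀ σ ∈ simpleButterfly m n, ∃ k, k ≤ n ∧ LDS σ = 2 ^ k) ∧
    (∀ k, k ≤ n →
      {σ | σ ∈ simpleButterfly m n ∧ LDS σ = 2 ^ k}.ncard =
        n.choose k * (m - 1) ^ k) := by
  classical
  obtain ⟨m', rfl⟩ : ∃ m', m = m' + 1 := ⟨m - 1, by omega⟩
  constructor
  · intro σ hσ
    rw [simpleButterfly_eq_range] at hσ
    obtain ⟨v, rfl⟩ := hσ
    refine ⟨(Finset.univ.filter fun i => v i ≠ 0).card, ?_, butterflyChain_lds m' n v⟩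
    exact (Finset.card_filter_le _ _).trans (by simp)
  · intro k hk
    have hset : {σ | σ ∈ simpleButterfly (m'+1) n ∧ LDS σ = 2 ^ k} =
        butterflyChain m' n '' {v | (Finset.univ.filter fun i => v i ≠ 0).card = k} := by
      ext σ
      simp only [Set.mem_setOf_eq, Set.mem_image, simpleButterfly_eq_range]
      constructor
      · rintro ⟨⟨v, rfl⟩, hl⟩
        refine ⟨v, ?_, rfl⟩
        have h2 := butterflyChain_lds m' n v
        rw [hl] at h2
        exact Nat.pow_right_injective (le_refl 2) h2.symm
      · rintro ⟨v, hv, rfl⟩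
        exact ⟨⟨v, rfl⟩, by rw [butterflyChain_lds, hv]⟩
    rw [hset, Set.ncard_image_of_injective _ (butterflyChain_injective m' n)]
    have h3 : {v : Fin n → Fin (m'+1) | (Finset.univ.filter fun i => v i ≠ 0).card = k}.ncard =
        (Finset.univ.filter fun v : Fin n → Fin (m'+1) =>
          (Finset.univ.filter fun i => v i ≠ 0).card = k).card := by
      rw [← Set.ncard_coe_finset]
      congr 1
      ext v
      simp
    rw [h3, card_support_eq]
    simp
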